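/- arXiv:0811.3739 — 2 statements merged into one kernel-verified Lean document; each statement's English description precedes it below -/
import Mathlib

section
/- The six operators E₁,…,E₆ on ℂ³ ⊗ ℂ³ satisfy ∑_{k=1}^{6} E_k |ψ₂⟩⟨ψ₂| E_k† = |φ⟩⟨φ|, where ψ₂ = (|0⟩⊗|2⟩ + |2⟩⊗|0⟩)/√2 and φ = √α(β|0⟩⊗|0⟩ + |1⟩⊗|1⟩). -/
open Kronecker Matrix ComplexOrder

noncomputable section

/-- Product (simple) vector in `ℂ^a ⊗ ℂ^b`, identified with functions `Fin a × Fin b → ℂ`. -/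
def IsSimpleVec {a b : ℕ} (v : Fin a × Fin b → ℂ) : Prop :=
  ∃ (x : Fin a → ℂ) (y : Fin b → ℂ), v = fun p => x p.1 * y p.2

/-- Rank-one projection `|v⟩⟨v|`. -/
def proj {d : Type*} [Fintype d] (v : d → ℂ) : Matrix d d ℂ :=
  Matrix.vecMulVec v (star v)

/-- The standard basis vector `|i⟩` of `ℂ³`. -/
def e (i : Fin 3) : Fin 3 → ℂ := Pi.single i 1

/-- The matrix unit `|i⟩⟨j|` on `ℂ³`. -/
def u (i j : Fin 3) : Matrix (Fin 3) (Fin 3) ℂ := Matrix.single i j 1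

/-- `α = (2 − √3)/4`. -/
def α : ℝ := (2 - Real.sqrt 3) / 4

/-- `β = 2 + √3`. -/
def β : ℝ := 2 + Real.sqrt 3

/-- `√α` as a complex number. -/
def sα : ℂ := ((Real.sqrt α : ℝ) : ℂ)

/-- `√β` as a complex number. -/
def sβ : ℂ := ((Real.sqrt β : ℝ) : ℂ)

/-- `√(2αβ)` as a complex number. -/
def sγ : ℂ := ((Real.sqrt (2 * α * β) : ℝ) : ℂ)

/-- The six Kraus operators `E₁, …, E₆` on `ℂ³ ⊗ ℂ³`. -/
def E : Fin 6 → Matrix (Fin 3 × Fin 3) (Fin 3 × Fin 3) ℂ :=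
  ![sα • ((sβ • u 0 0 + u 1 1) ⊗ₖ (sβ • u 0 1 + u 1 0)),
    sα • ((u 1 0 + sβ • u 0 1) ⊗ₖ (u 1 1 + sβ • u 0 0)),
    sα • ((sβ • u 0 0 + u 1 2) ⊗ₖ (sβ • u 0 2 + u 1 0)),
    sα • ((u 1 0 + sβ • u 0 2) ⊗ₖ (u 1 2 + sβ • u 0 0)),
    u 1 1 ⊗ₖ (sγ • u 1 1 + u 2 2),
    u 2 2 ⊗ₖ (u 1 1 + sγ • u 2 2)]

/-- `ψ₁ = (|0⟩⊗|1⟩ + |1⟩⊗|0⟩)/√2`. -/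
def ψ₁ : Fin 3 × Fin 3 → ℂ :=
  ((Real.sqrt 2 : ℝ) : ℂ)⁻¹ • (fun p => e 0 p.1 * e 1 p.2 + e 1 p.1 * e 0 p.2)

/-- `ψ₂ = (|0⟩⊗|2⟩ + |2⟩⊗|0⟩)/√2`. -/
def ψ₂ : Fin 3 × Fin 3 → ℂ :=
  ((Real.sqrt 2 : ℝ) : ℂ)⁻¹ • (fun p => e 0 p.1 * e 2 p.2 + e 2 p.1 * e 0 p.2)

/-- `φ = √α(β|0⟩⊗|0⟩ + |1⟩⊗|1⟩)`. -/
def φ : Fin 3 × Fin 3 → ℂ :=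
  sα • (fun p => ((β : ℝ) : ℂ) * (e 0 p.1 * e 0 p.2) + e 1 p.1 * e 1 p.2)

lemma hαβ : α * β = 1/4 := by
  have h3 : Real.sqrt 3 * Real.sqrt 3 = 3 := Real.mul_self_sqrt (by norm_num)
  unfold α β; nlinarith

lemma hβ0 : (0:ℝ) ≤ β := by unfold β; positivity

lemma hα0 : (0:ℝ) ≤ α := by
  unfold α
  have : Real.sqrt 3 ≤ 2 := by
    rw [show (2:ℝ) = Real.sqrt 4 by rw [show (4:ℝ)=2^2 by norm_num, Real.sqrt_sq]; norm_num]
    exact Real.sqrt_le_sqrt (by norm_num)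
  linarith

lemma hsβ : sβ ^ 2 = ((β:ℝ):ℂ) := by
  unfold sβ; rw [sq, ← Complex.ofReal_mul, Real.mul_self_sqrt hβ0]

lemma conj_proj {n m : Type*} [Fintype n] [Fintype m] (A : Matrix m n ℂ) (v : n → ℂ) :
    A * proj v * Aᴴ = proj (A *ᵥ v) := by
  ext i j
  simp [proj, Matrix.mul_apply, Matrix.vecMulVec_apply, Matrix.mulVec, dotProduct,
    Finset.sum_mul, Finset.mul_sum, Matrix.conjTranspose_apply, map_sum]
  congr 1; ext k; congr 1; ext l; ring

lemma hE0v : E 0 *ᵥ ψ₂ = 0 := by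
  funext p
  fin_cases p <;>
  simp [E, ψ₂, u, e, Matrix.mulVec, dotProduct, Fintype.sum_prod_type,
    Fin.sum_univ_succ, Matrix.kroneckerMap_apply, Matrix.single, Pi.single,
    Function.update]

lemma hE1v : E 1 *ᵥ ψ₂ = 0 := by
  funext p
  fin_cases p <;>
  simp [E, ψ₂, u, e, Matrix.mulVec, dotProduct, Fintype.sum_prod_type,
    Fin.sum_univ_succ, Matrix.kroneckerMap_apply, Matrix.single, Pi.single,
    Function.update]

lemma hE2v : E 2 *ᵥ ψ₂ = ((Real.sqrt 2 : ℝ) : ℂ)⁻¹ • φ := by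
  funext p
  fin_cases p <;>
    (simp [E, ψ₂, φ, u, e, Matrix.mulVec, dotProduct, Fintype.sum_prod_type,
      Fin.sum_univ_succ, Matrix.kroneckerMap_apply, Matrix.single, Pi.single,
      Function.update] <;> (first | ring1 | (rw [hsβ]; ring1) | (ring_nf; rw [hsβ]; ring1)))

lemma hE3v : E 3 *ᵥ ψ₂ = ((Real.sqrt 2 : ℝ) : ℂ)⁻¹ • φ := by
  funext p
  fin_cases p <;>
    (simp [E, ψ₂, φ, u, e, Matrix.mulVec, dotProduct, Fintype.sum_prod_type,
      Fin.sum_univ_succ, Matrix.kroneckerMap_apply, Matrix.single, Pi.single,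
      Function.update] <;> (first | ring1 | (rw [hsβ]; ring1) | (ring_nf; rw [hsβ]; ring1)))

lemma hE4v : E 4 *ᵥ ψ₂ = 0 := by
  rw [show E 4 = u 1 1 ⊗ₖ (sγ • u 1 1 + u 2 2) from rfl]
  funext p
  fin_cases p <;>
  simp [ψ₂, u, e, Matrix.mulVec, dotProduct, Fintype.sum_prod_type,
    Fin.sum_univ_succ, Matrix.kroneckerMap_apply, Matrix.single, Pi.single,
    Function.update]

lemma hE5v : E 5 *ᵥ ψ₂ = 0 := by
  rw [show E 5 = u 2 2 ⊗ₖ (u 1 1 + sγ • u 2 2) from rfl]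
  funext p
  fin_cases p <;>
  simp [ψ₂, u, e, Matrix.mulVec, dotProduct, Fintype.sum_prod_type,
    Fin.sum_univ_succ, Matrix.kroneckerMap_apply, Matrix.single, Pi.single,
    Function.update]

lemma proj_zero : proj (0 : Fin 3 × Fin 3 → ℂ) = 0 := by
  ext i j; simp [proj, Matrix.vecMulVec_apply]

lemma proj_smul : proj (((Real.sqrt 2 : ℝ) : ℂ)⁻¹ • φ) = (2:ℂ)⁻¹ • proj φ := by
  have h2 : (((Real.sqrt 2 : ℝ) : ℂ))⁻¹ * (((Real.sqrt 2 : ℝ) : ℂ))⁻¹ = (2:ℂ)⁻¹ := by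
    rw [← mul_inv, ← Complex.ofReal_mul, Real.mul_self_sqrt (by norm_num)]; norm_num
  ext i j
  simp [proj, Matrix.vecMulVec_apply, Complex.conj_ofReal]
  rw [← h2]; ring

theorem kraus_maps_psi_two_to_phi : ∑ k, E k * proj ψ₂ * (E k)ᴴ = proj φ := by
  rw [Fin.sum_univ_six]
  rw [conj_proj, conj_proj, conj_proj, conj_proj, conj_proj, conj_proj,
    hE0v, hE1v, hE2v, hE3v, hE4v, hE5v, proj_zero, proj_smul]
  ext i j
  simp
  ring
end
end

section
/- Let ρ be a density matrix on ℂ^a ⊗ ℂ^b of rank at least 2, let φ be an entangled unit vector, and suppose some separable operation {A_k ⊗ B_k}_{k=1,…,n} satisfies ∑_k (A_k ⊗ B_k) ρ (A_k ⊗ B_k)† = |φ⟩⟨φ|. Then no nonzero vector in the range (support) of ρ is a product (simple) vector. -/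
open Kronecker Matrix ComplexOrder

noncomputable section

/-- Cauchy–Schwarz for the complex dot product. -/
lemma dot_cs {d : Type*} [Fintype d] (z m : d → ℂ) :
    star (star z ⬝ᵥ m) * (star z ⬝ᵥ m) ≤ (star z ⬝ᵥ z) * (star m ⬝ᵥ m) := by
  let z' : EuclideanSpace ℂ d := WithLp.toLp 2 z
  let m' : EuclideanSpace ℂ d := WithLp.toLp 2 m
  have h2 : star z ⬝ᵥ z = ((‖z'‖ ^ 2 : ℝ) : ℂ) := by
    rw [show star z ⬝ᵥ z = inner ℂ z' z' from ((EuclideanSpace.inner_toLp_toLp z z).trans (dotProduct_comm _ _)).symm, inner_self_eq_norm_sq_to_K]; norm_cast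
  have h3 : star m ⬝ᵥ m = ((‖m'‖ ^ 2 : ℝ) : ℂ) := by
    rw [show star m ⬝ᵥ m = inner ℂ m' m' from ((EuclideanSpace.inner_toLp_toLp m m).trans (dotProduct_comm _ _)).symm, inner_self_eq_norm_sq_to_K]; norm_cast
  have h4 : star (inner ℂ z' m' : ℂ) * inner ℂ z' m' = ((‖(inner ℂ z' m' : ℂ)‖ ^ 2 : ℝ) : ℂ) := by
    rw [show (star (inner ℂ z' m' : ℂ)) = starRingEnd ℂ (inner ℂ z' m') from rfl]
    rw [← Complex.normSq_eq_conj_mul_self, Complex.normSq_eq_norm_sq, Complex.ofReal_pow]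
  rw [show star z ⬝ᵥ m = inner ℂ z' m' from ((EuclideanSpace.inner_toLp_toLp z m).trans (dotProduct_comm _ _)).symm, h2, h3, h4, ← Complex.ofReal_mul,
    Complex.real_le_real]
  have hcs := norm_inner_le_norm (𝕜 := ℂ) z' m'
  calc ‖(inner ℂ z' m' : ℂ)‖ ^ 2 ≤ (‖z'‖ * ‖m'‖) ^ 2 :=
        pow_le_pow_left₀ (norm_nonneg _) hcs 2
    _ = ‖z'‖ ^ 2 * ‖m'‖ ^ 2 := by ring

lemma vecMulVec_mulVec' {d : Type*} [Fintype d] (v w x : d → ℂ) :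
    (vecMulVec v w) *ᵥ x = (w ⬝ᵥ x) • v := by
  funext i
  simp [vecMulVec_apply, mulVec, dotProduct, Finset.mul_sum, mul_comm, mul_assoc, mul_left_comm]

lemma proj_posSemidef {d : Type*} [Fintype d] (v : d → ℂ) :
    (vecMulVec v (star v)).PosSemidef := by
  refine PosSemidef.of_dotProduct_mulVec_nonneg ?_ ?_
  · ext i j
    simp [vecMulVec_apply, conjTranspose_apply, mul_comm]
  · intro x
    rw [vecMulVec_mulVec', dotProduct_smul, smul_eq_mul]
    rw [show star x ⬝ᵥ v = star (star v ⬝ᵥ x) by rw [star_dotProduct], mul_comm]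
    exact star_mul_self_nonneg _

lemma mul_vecMulVec_mul {d e : Type*} [Fintype d] [Fintype e] (M : Matrix e d ℂ) (v : d → ℂ) :
    M * vecMulVec v (star v) * Mᴴ = vecMulVec (M *ᵥ v) (star (M *ᵥ v)) := by
  ext i j
  simp only [Matrix.mul_apply, vecMulVec_apply, conjTranspose_apply, mulVec, dotProduct,
    Pi.star_apply, Finset.sum_mul, Finset.mul_sum, RCLike.star_def, _root_.map_sum, _root_.map_mul]
  apply Finset.sum_congr rfl; intro l _
  apply Finset.sum_congr rfl; intro k _
  ring

lemma kron_mulVec_simple {a b : ℕ} (A : Matrix (Fin a) (Fin a) ℂ) (B : Matrix (Fin b) (Fin b) ℂ)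
    (x : Fin a → ℂ) (y : Fin b → ℂ) :
    (A ⊗ₖ B) *ᵥ (fun p => x p.1 * y p.2) = fun p => (A *ᵥ x) p.1 * (B *ᵥ y) p.2 := by
  funext p
  simp only [mulVec, dotProduct, kroneckerMap_apply, Fintype.sum_prod_type, Finset.sum_mul,
    Finset.mul_sum]
  rw [Finset.sum_comm]
  apply Finset.sum_congr rfl; intro i _
  apply Finset.sum_congr rfl; intro j _
  ring

lemma sum_mulVec' {d : Type*} [Fintype d] {ι : Type*} (s : Finset ι)
    (f : ι → Matrix d d ℂ) (x : d → ℂ) :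
    (∑ i ∈ s, f i) *ᵥ x = ∑ i ∈ s, (f i *ᵥ x) := by
  funext j
  simp only [mulVec, dotProduct, Finset.sum_apply, Matrix.sum_apply, Finset.sum_mul]
  rw [Finset.sum_comm]

lemma dotProduct_sum' {d : Type*} [Fintype d] {ι : Type*} (s : Finset ι)
    (v : d → ℂ) (f : ι → (d → ℂ)) :
    v ⬝ᵥ (∑ i ∈ s, f i) = ∑ i ∈ s, v ⬝ᵥ f i := by
  simp only [dotProduct, Finset.sum_apply, Finset.mul_sum]
  rw [Finset.sum_comm]

lemma posSemidef_sum' {d : Type*} [Fintype d] {ι : Type*} (s : Finset ι)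
    (f : ι → Matrix d d ℂ) (hf : ∀ i ∈ s, (f i).PosSemidef) :
    (∑ i ∈ s, f i).PosSemidef := by
  refine PosSemidef.of_dotProduct_mulVec_nonneg ?_ ?_
  · show (∑ i ∈ s, f i)ᴴ = _
    rw [conjTranspose_sum]
    exact Finset.sum_congr rfl fun i hi => (hf i hi).1
  · intro x
    rw [sum_mulVec', dotProduct_sum']
    exact Finset.sum_nonneg fun i hi => (hf i hi).dotProduct_mulVec_nonneg x

theorem sep_distillation_forces_entangled_support {a b n : ℕ}
    (ρ : Matrix (Fin a × Fin b) (Fin a × Fin b) ℂ)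
    (hρ : ρ.PosSemidef) (htr : ρ.trace = 1) (hrank : 2 ≤ ρ.rank)
    (φ : Fin a × Fin b → ℂ) (hφ : star φ ⬝ᵥ φ = 1) (hent : ¬ IsSimpleVec φ)
    (A : Fin n → Matrix (Fin a) (Fin a) ℂ) (B : Fin n → Matrix (Fin b) (Fin b) ℂ)
    (hcomp : ∑ k, (A k ⊗ₖ B k)ᴴ * (A k ⊗ₖ B k) = 1)
    (h : ∑ k, (A k ⊗ₖ B k) * ρ * (A k ⊗ₖ B k)ᴴ = proj φ) :
    ∀ v ∈ LinearMap.range ρ.mulVecLin, v ≠ 0 → ¬ IsSimpleVec v := by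
  rintro v hv hvne ⟨x, y, hxy⟩
  obtain ⟨u, hu⟩ := hv
  rw [mulVecLin_apply] at hu
  set E : Fin n → Matrix (Fin a × Fin b) (Fin a × Fin b) ℂ := fun k => A k ⊗ₖ B k with hE
  -- square root and the scalar c
  obtain ⟨S, hSherm, hSS⟩ : ∃ S : Matrix (Fin a × Fin b) (Fin a × Fin b) ℂ, Sᴴ = S ∧ S * S = ρ := by
    open scoped MatrixOrder in
    exact ⟨CFC.sqrt ρ, (CFC.sqrt_nonneg ρ).posSemidef.1, CFC.sqrt_mul_sqrt_self ρ hρ.nonneg⟩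
  set z : (Fin a × Fin b) → ℂ := S *ᵥ u with hz
  have hvz : S *ᵥ z = v := by rw [hz, mulVec_mulVec, hSS, hu]
  set c : ℂ := star z ⬝ᵥ z with hc
  have hc0 : 0 ≤ c := dotProduct_star_self_nonneg z
  have hcne : c ≠ 0 := by
    intro h0
    have hz0 : z = 0 := dotProduct_star_self_eq_zero.mp h0
    exact hvne (by rw [← hvz, hz0, mulVec_zero])
  have hcstar : star c = c := by
    rw [hc, ← star_dotProduct]
  -- key Cauchy–Schwarz estimate
  have key : ∀ w : (Fin a × Fin b) → ℂ,
      star w ⬝ᵥ (vecMulVec v (star v)) *ᵥ w ≤ c * (star w ⬝ᵥ ρ *ᵥ w) := by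
    intro w
    have hρw : star w ⬝ᵥ ρ *ᵥ w = star (S *ᵥ w) ⬝ᵥ (S *ᵥ w) := by
      rw [← hSS, ← mulVec_mulVec, dotProduct_mulVec, star_mulVec, hSherm]
    have hvw : star v ⬝ᵥ w = star z ⬝ᵥ (S *ᵥ w) := by
      rw [← hvz, star_mulVec, hSherm, ← dotProduct_mulVec]
    have hwv : star w ⬝ᵥ v = star (star v ⬝ᵥ w) := by
      rw [star_dotProduct]
    rw [vecMulVec_mulVec', dotProduct_smul, smul_eq_mul, hwv, hvw, hρw, mul_comm]
    exact dot_cs z (S *ᵥ w)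
  -- σ = c • ρ - |v⟩⟨v| is PSD
  have hσps : (c • ρ - vecMulVec v (star v)).PosSemidef := by
    refine PosSemidef.of_dotProduct_mulVec_nonneg ?_ ?_
    · show _ᴴ = _
      rw [conjTranspose_sub, conjTranspose_smul, hcstar, hρ.1.eq, (proj_posSemidef v).1.eq]
    · intro w
      rw [sub_mulVec, dotProduct_sub, smul_mulVec, dotProduct_smul, smul_eq_mul]
      exact sub_nonneg.mpr (key w)
  -- N = c • proj φ - M is PSD
  set M : Matrix (Fin a × Fin b) (Fin a × Fin b) ℂ :=
    ∑ k, E k * vecMulVec v (star v) * (E k)ᴴ with hM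
  have hMps : M.PosSemidef :=
    posSemidef_sum' _ _ fun k _ => (proj_posSemidef v).mul_mul_conjTranspose_same (E k)
  have hNeq : c • proj φ - M = ∑ k, E k * (c • ρ - vecMulVec v (star v)) * (E k)ᴴ := by
    rw [← h, hM, Finset.smul_sum, ← Finset.sum_sub_distrib]
    apply Finset.sum_congr rfl; intro k _
    rw [Matrix.mul_sub, Matrix.sub_mul, Matrix.mul_smul, Matrix.smul_mul]
  have hNps : (c • proj φ - M).PosSemidef := by
    rw [hNeq]
    exact posSemidef_sum' _ _ fun k _ => hσps.mul_mul_conjTranspose_same (E k)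
  -- orthogonality: vectors orthogonal to φ are orthogonal to each E k *ᵥ v
  have orth : ∀ u' : (Fin a × Fin b) → ℂ, star φ ⬝ᵥ u' = 0 →
      ∀ k, star (E k *ᵥ v) ⬝ᵥ u' = 0 := by
    intro u' hu' k
    have h1 : star u' ⬝ᵥ (c • proj φ) *ᵥ u' = 0 := by
      rw [smul_mulVec, dotProduct_smul, proj, vecMulVec_mulVec', dotProduct_smul, hu']
      simp
    have h2 := hNps.dotProduct_mulVec_nonneg u'
    rw [sub_mulVec, dotProduct_sub, h1, zero_sub, le_neg] at h2
    have h5 : star u' ⬝ᵥ M *ᵥ u' = 0 := le_antisymm (by simpa using h2) (hMps.dotProduct_mulVec_nonneg u')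
    have h6 : star u' ⬝ᵥ M *ᵥ u' =
        ∑ k, star (star (E k *ᵥ v) ⬝ᵥ u') * (star (E k *ᵥ v) ⬝ᵥ u') := by
      rw [hM]
      have : ∀ k : Fin n, E k * vecMulVec v (star v) * (E k)ᴴ =
          vecMulVec (E k *ᵥ v) (star (E k *ᵥ v)) := fun k => mul_vecMulVec_mul _ _
      simp only [this]
      rw [sum_mulVec', dotProduct_sum']
      apply Finset.sum_congr rfl; intro j _
      rw [vecMulVec_mulVec', dotProduct_smul, smul_eq_mul,
        show star u' ⬝ᵥ (E j *ᵥ v) = star (star (E j *ᵥ v) ⬝ᵥ u') by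
          rw [star_dotProduct], mul_comm]
    have h7 := (Finset.sum_eq_zero_iff_of_nonneg
      (fun i _ => star_mul_self_nonneg (star (E i *ᵥ v) ⬝ᵥ u'))).mp (h6 ▸ h5) k (Finset.mem_univ k)
    by_contra hne
    exact hne (by
      have := mul_eq_zero.mp h7
      rcases this with h' | h'
      · simpa using congrArg star h'
      · exact h')
  -- each E k *ᵥ v is a multiple of φ
  have span : ∀ k, E k *ᵥ v = (star φ ⬝ᵥ (E k *ᵥ v)) • φ := by
    intro k
    set w := E k *ᵥ v with hw
    set cφ := star φ ⬝ᵥ w with hcφ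
    set u' := w - cφ • φ with hu'def
    have hu' : star φ ⬝ᵥ u' = 0 := by
      rw [hu'def, dotProduct_sub, dotProduct_smul, hφ, smul_eq_mul, mul_one, sub_self]
    have h1 := orth u' hu' k
    have h2 : star u' ⬝ᵥ u' = 0 := by
      have hstar : star u' = star w - star cφ • star φ := by
        rw [hu'def, star_sub, star_smul]
      rw [hstar, sub_dotProduct, smul_dotProduct, h1, hu', smul_zero, sub_zero]
    have h3 : u' = 0 := dotProduct_star_self_eq_zero.mp h2
    have := sub_eq_zero.mp (hu'def ▸ h3)
    exact this
  -- case split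
  by_cases hall : ∀ k, star φ ⬝ᵥ (E k *ᵥ v) = 0
  · have hw0 : ∀ k, E k *ᵥ v = 0 := fun k => by rw [span k, hall k, zero_smul]
    have hvv : star v ⬝ᵥ v = 0 := by
      have h1 : star v ⬝ᵥ v = star v ⬝ᵥ (∑ k, (E k)ᴴ * E k) *ᵥ v := by
        rw [hcomp, one_mulVec]
      rw [h1, sum_mulVec', dotProduct_sum']
      apply Finset.sum_eq_zero; intro k _
      rw [← mulVec_mulVec, dotProduct_mulVec, ← star_mulVec, hw0 k]
      simp
    exact hvne (dotProduct_star_self_eq_zero.mp hvv)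
  · push_neg at hall
    obtain ⟨k, hk⟩ := hall
    apply hent
    have hs := span k
    set cφ := star φ ⬝ᵥ (E k *ᵥ v) with hcφdef
    have hφeq : φ = cφ⁻¹ • (E k *ᵥ v) := by
      rw [hs, smul_smul, inv_mul_cancel₀ hk, one_smul]
    have hEv : E k *ᵥ v = fun p => (A k *ᵥ x) p.1 * (B k *ᵥ y) p.2 := by
      rw [hE, hxy]
      exact kron_mulVec_simple (A k) (B k) x y
    refine ⟨fun i => cφ⁻¹ * (A k *ᵥ x) i, B k *ᵥ y, ?_⟩
    rw [hφeq, hEv]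
    funext p
    simp [mul_assoc]
end
end
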